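/- Let σ be a rational polyhedral cone dual to an fs monoid P, and let σ̄ = Hom(P, ℝ≥0 ∪ {∞}) be its extended cone. Then σ̄ decomposes as the disjoint union, over faces κ of σ, of the subsets ∞_κ + σ; moreover each ∞_κ + σ is a submonoid of σ̄ with neutral element ∞_κ, canonically isomorphic as a monoid to the quotient cone σ/(ℝκ). -/

import Mathlib

namespace Stmt16

open scoped NNReal ENNReal

variable (P : Type*) [AddCommMonoid P]

/-- `h` is an additive map (a morphism of monoids given as a bare function). -/
def IsMonHom {α : Type*} [AddCommMonoid α] (h : P → α) : Prop :=
  h 0 = 0 ∧ ∀ a b : P, h (a + b) = h a + h b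

/-- The cone `σ = Hom(P, ℝ≥0)` associated to `P`. -/
def cone : Set (P → ℝ≥0) := {h | IsMonHom P h}

/-- The extended cone `σ̄ = Hom(P, ℝ≥0 ∪ {∞})`. -/
def extCone : Set (P → ℝ≥0∞) := {h | IsMonHom P h}

/-- `κ` is a face of the cone `σ`: a submonoid of `σ` closed under summands. -/
def IsFace (κ : Set (P → ℝ≥0)) : Prop :=
  κ ⊆ cone P ∧ (0 : P → ℝ≥0) ∈ κ ∧ (∀ f ∈ κ, ∀ g ∈ κ, f + g ∈ κ) ∧
    ∀ f ∈ cone P, ∀ g ∈ cone P, f + g ∈ κ → f ∈ κ ∧ g ∈ κ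

open Classical in
/-- The origin at `κ = ∞`: it sends `f ∈ P` to `0` if `f` lies in the dual face `κ^∨`
(i.e. `φ f = 0` for all `φ ∈ κ`) and to `∞` otherwise. -/
noncomputable def infAt (κ : Set (P → ℝ≥0)) : P → ℝ≥0∞ :=
  fun f => if ∀ φ ∈ κ, φ f = 0 then 0 else ⊤

/-- The asymptotic cone `∞_κ + σ ⊆ σ̄`. -/
def asympCone (κ : Set (P → ℝ≥0)) : Set (P → ℝ≥0∞) :=
  {h | ∃ q ∈ cone P, h = fun f => infAt P κ f + (q f : ℝ≥0∞)}

end Stmt16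

namespace Stmt16Aux

variable {ι : Type*} [Fintype ι]

def dot (x y : ι → ℚ) : ℚ := ∑ i, x i * y i

lemma dot_comm (x y : ι → ℚ) : dot x y = dot y x := by
  unfold dot; exact Finset.sum_congr rfl fun i _ => mul_comm _ _

lemma dot_add_right (x y z : ι → ℚ) : dot x (y + z) = dot x y + dot x z := by
  unfold dot; rw [← Finset.sum_add_distrib]
  exact Finset.sum_congr rfl fun i _ => by simp [mul_add]

lemma dot_smul_right (t : ℚ) (x y : ι → ℚ) : dot x (t • y) = t * dot x y := by
  unfold dot; rw [Finset.mul_sum]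
  exact Finset.sum_congr rfl fun i _ => by simp [Pi.smul_apply, smul_eq_mul]; ring

lemma dot_sub_right (x y z : ι → ℚ) : dot x (y - z) = dot x y - dot x z := by
  unfold dot; rw [← Finset.sum_sub_distrib]
  exact Finset.sum_congr rfl fun i _ => by simp [mul_sub]

lemma dot_neg_left (x y : ι → ℚ) : dot (-x) y = - dot x y := by
  unfold dot; rw [← Finset.sum_neg_distrib]
  exact Finset.sum_congr rfl fun i _ => by simp

lemma dot_self_pos {x : ι → ℚ} (hx : x ≠ 0) : 0 < dot x x := by
  rcases Function.ne_iff.mp hx with ⟨i, hi⟩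
  have hlt : (0:ℚ) < x i * x i := by
    have := mul_self_nonneg (x i)
    rcases this.lt_or_eq with h | h
    · exact h
    · exact absurd (mul_self_eq_zero.mp h.symm) hi
  exact Finset.sum_pos' (fun j _ => mul_self_nonneg _) ⟨i, Finset.mem_univ i, hlt⟩

lemma dot_neg_right (x y : ι → ℚ) : dot x (-y) = - dot x y := by
  rw [dot_comm, dot_neg_left, dot_comm]

lemma dot_zero_right (x : ι → ℚ) : dot x 0 = 0 := by
  unfold dot; simp

def inCone : List (ι → ℚ) → (ι → ℚ) → Prop
  | [], x => x = 0
  | a :: L, x => ∃ t : ℚ, 0 ≤ t ∧ ∃ y, inCone L y ∧ x = t • a + y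

end Stmt16Aux

namespace Stmt16Aux

variable {ι : Type*} [Fintype ι]

lemma inCone_shift (b : ι → ℚ) (c : (ι → ℚ) → ℚ) :
    ∀ (L : List (ι → ℚ)) (_ : ∀ a ∈ L, 0 ≤ c a) (z : ι → ℚ),
      inCone (L.map (fun a => a + c a • b)) z →
      ∃ w, ∃ s : ℚ, inCone L w ∧ 0 ≤ s ∧ z = w + s • b := by
  intro L
  induction L with
  | nil => intro _ z hz; exact ⟨0, 0, rfl, le_refl _, by simpa [inCone] using hz⟩
  | cons a L ih =>
      intro hc z hz
      obtain ⟨t, ht, y, hy, rfl⟩ := hz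
      obtain ⟨w, s, hw, hs, rfl⟩ := ih (fun a ha => hc a (List.mem_cons_of_mem _ ha)) y hy
      have hca : 0 ≤ c a := hc a List.mem_cons_self
      refine ⟨t • a + w, t * c a + s, ⟨t, ht, w, hw, rfl⟩, by positivity, ?_⟩
      rw [smul_add, add_smul, mul_smul]
      module

lemma farkas_aux : ∀ (n : ℕ) (L : List (ι → ℚ)), L.length = n → ∀ x : ι → ℚ,
    inCone L x ∨ ∃ y : ι → ℚ, (∀ a ∈ L, 0 ≤ dot y a) ∧ dot y x < 0 := by
  intro n
  induction n with
  | zero =>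
      intro L hL x
      rw [List.length_eq_zero_iff] at hL; subst hL
      by_cases hx : x = 0
      · exact Or.inl hx
      · exact Or.inr ⟨-x, fun a ha => absurd ha List.not_mem_nil,
          by rw [dot_neg_left]; exact neg_neg_of_pos (dot_self_pos hx)⟩
  | succ n ih =>
      intro L hL x
      rcases L with _ | ⟨b, L'⟩
      · simp at hL
      have hL' : L'.length = n := by simpa using hL
      rcases ih L' hL' x with hx | ⟨y, hy, hyx⟩
      · exact Or.inl ⟨0, le_refl _, x, hx, by simp⟩
      by_cases hyb : 0 ≤ dot y b
      · refine Or.inr ⟨y, ?_, hyx⟩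
        intro a ha
        rcases List.mem_cons.mp ha with rfl | ha
        · exact hyb
        · exact hy a ha
      push_neg at hyb
      set c : (ι → ℚ) → ℚ := fun a => -(dot y a / dot y b) with hcdef
      have hc : ∀ a ∈ L', 0 ≤ c a := fun a ha =>
        neg_nonneg.mpr (div_nonpos_of_nonneg_of_nonpos (hy a ha) hyb.le)
      set L'' : List (ι → ℚ) := L'.map (fun a => a + c a • b) with hL''def
      have hL''len : L''.length = n := by simp [hL''def, hL']
      set q : ℚ := dot y x / dot y b with hqdef
      have hq : 0 ≤ q := le_of_lt (by
        rw [hqdef, ← neg_div_neg_eq]; exact div_pos (by linarith) (by linarith))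
      set x' : ι → ℚ := x + (-q) • b with hx'def
      rcases ih L'' hL''len x' with hx' | ⟨z, hz, hzx'⟩
      · left
        obtain ⟨w, s, hw, hs, hws⟩ := inCone_shift b c L' hc x' hx'
        refine ⟨s + q, by positivity, w, hw, ?_⟩
        have : x = x' + q • b := by rw [hx'def]; module
        rw [this, hws]; module
      · right
        set w : ι → ℚ := z + (-(dot z b / dot y b)) • y with hwdef
        have hwb : dot w b = 0 := by
          rw [hwdef, dot_comm, dot_add_right, dot_smul_right, dot_comm b z, dot_comm b y]
          have hb0 : dot y b ≠ 0 := ne_of_lt hyb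
          field_simp
          ring
        have hwa : ∀ a ∈ L', 0 ≤ dot w a := by
          intro a ha
          have hza : 0 ≤ dot z (a + c a • b) :=
            hz _ (List.mem_map.mpr ⟨a, ha, rfl⟩)
          rw [dot_add_right, dot_smul_right] at hza
          have heq : dot w a = dot z a + c a * dot z b := by
            rw [hwdef, dot_comm, dot_add_right, dot_smul_right, dot_comm a z, dot_comm a y,
              hcdef]
            have hb0 : dot y b ≠ 0 := ne_of_lt hyb
            field_simp
          rw [heq]; exact hza
        have hwx : dot w x < 0 := by
          have heq : dot w x = dot z x' := by
            rw [hwdef, hx'def, dot_comm, dot_add_right, dot_smul_right, dot_comm x z,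
              dot_comm x y, dot_add_right, dot_smul_right, hqdef]
            have hb0 : dot y b ≠ 0 := ne_of_lt hyb
            field_simp
          rw [heq]; exact hzx'
        refine ⟨w, ?_, hwx⟩
        intro a ha
        rcases List.mem_cons.mp ha with rfl | ha
        · exact hwb.ge
        · exact hwa a ha

theorem farkas (L : List (ι → ℚ)) (x : ι → ℚ) :
    inCone L x ∨ ∃ y : ι → ℚ, (∀ a ∈ L, 0 ≤ dot y a) ∧ dot y x < 0 :=
  farkas_aux L.length L rfl x

/-- Cone membership transfers along any predicate closed under `0`, addition and
nonnegative scaling. -/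
lemma inCone_closure {Good : (ι → ℚ) → Prop} (h0 : Good 0)
    (hadd : ∀ u v, Good u → Good v → Good (u + v))
    (hsmul : ∀ (t : ℚ), 0 ≤ t → ∀ v, Good v → Good (t • v)) :
    ∀ (L : List (ι → ℚ)) (x : ι → ℚ), (∀ a ∈ L, Good a) → inCone L x → Good x := by
  intro L
  induction L with
  | nil => intro x _ hx; rwa [hx]
  | cons a L ih =>
      intro x hG hx
      obtain ⟨t, ht, y, hy, rfl⟩ := hx
      exact hadd _ _ (hsmul t ht a (hG a List.mem_cons_self))
        (ih y (fun b hb => hG b (List.mem_cons_of_mem _ hb)) hy)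

end Stmt16Aux

namespace Stmt16Aux

open scoped NNReal ENNReal

section Presentation

variable {P : Type*} [AddCommMonoid P] [IsCancelAdd P] (S : Finset P)

/-- Evaluation of an exponent vector. -/
def eps (c : {x // x ∈ S} → ℕ) : P := ∑ s : {x // x ∈ S}, c s • (s : P)

lemma eps_add (c c' : {x // x ∈ S} → ℕ) : eps S (c + c') = eps S c + eps S c' := by
  unfold eps
  rw [← Finset.sum_add_distrib]
  exact Finset.sum_congr rfl fun i _ => by simp [add_nsmul]

lemma eps_zero : eps S (0 : {x // x ∈ S} → ℕ) = 0 := by simp [eps]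

lemma eps_nsmul (N : ℕ) (c : {x // x ∈ S} → ℕ) : eps S (N • c) = N • eps S c := by
  induction N with
  | zero => simp [eps_zero]
  | succ n ih =>
      have h1 : (n + 1) • c = n • c + c := by ext i; simp [succ_nsmul, add_mul]
      rw [h1, eps_add, ih, succ_nsmul]

variable {S}

lemma eps_of_multiset (l : Multiset P) (hl : ∀ y ∈ l, y ∈ S) :
    ∃ c, eps S c = l.sum := by
  classical
  induction l using Multiset.induction with
  | empty => exact ⟨0, by simp [eps_zero]⟩
  | cons a l ih =>
      have ha : a ∈ S := hl a (Multiset.mem_cons_self a l)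
      obtain ⟨c, hc⟩ := ih (fun y hy => hl y (Multiset.mem_cons_of_mem hy))
      refine ⟨c + fun i => if i = (⟨a, ha⟩ : {x // x ∈ S}) then 1 else 0, ?_⟩
      rw [eps_add, hc, Multiset.sum_cons]
      have he : eps S (fun i => if i = (⟨a, ha⟩ : {x // x ∈ S}) then 1 else 0) = a := by
        unfold eps
        rw [Finset.sum_eq_single (⟨a, ha⟩ : {x // x ∈ S})]
        · simp
        · intro b _ hb; simp [hb]
        · intro h; exact absurd (Finset.mem_univ _) h
      rw [he, add_comm]

lemma eps_surj (hS : AddSubmonoid.closure (S : Set P) = ⊤) (f : P) :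
    ∃ c, eps S c = f := by
  have hf : f ∈ AddSubmonoid.closure (S : Set P) := hS ▸ AddSubmonoid.mem_top f
  obtain ⟨l, hl, hsum⟩ := AddSubmonoid.exists_multiset_of_mem_closure hf
  obtain ⟨c, hc⟩ := eps_of_multiset l hl
  exact ⟨c, hc.trans hsum⟩

section Casts

variable {ι : Type*}

def QZ (d : ι → ℤ) : ι → ℚ := fun i => d i
def QN (c : ι → ℕ) : ι → ℚ := fun i => c i
def ZN (c : ι → ℕ) : ι → ℤ := fun i => c i
def posP (d : ι → ℤ) : ι → ℕ := fun i => (d i).toNat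
def negP (d : ι → ℤ) : ι → ℕ := fun i => (-d i).toNat

lemma QZ_add (d e : ι → ℤ) : QZ (d + e) = QZ d + QZ e := by
  funext i; simp [QZ]
lemma QZ_sub (d e : ι → ℤ) : QZ (d - e) = QZ d - QZ e := by
  funext i; simp [QZ]
lemma QZ_zero : QZ (0 : ι → ℤ) = 0 := by funext i; simp [QZ]
lemma QZ_zsmul (z : ℤ) (d : ι → ℤ) : QZ (z • d) = (z : ℚ) • QZ d := by
  funext i; simp [QZ]
lemma QN_add (c e : ι → ℕ) : QN (c + e) = QN c + QN e := by
  funext i; simp [QN]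
lemma QN_zero : QN (0 : ι → ℕ) = 0 := by funext i; simp [QN]
lemma QZ_ZN (c : ι → ℕ) : QZ (ZN c) = QN c := by
  funext i; simp [QZ, ZN, QN]

end Casts

section Relations

variable {P : Type*} [AddCommMonoid P] [IsCancelAdd P] (S : Finset P)

/-- The subgroup of integral relations between the generators. -/
def Rel : AddSubgroup ({x // x ∈ S} → ℤ) where
  carrier := {d | eps S (posP d) = eps S (negP d)}
  zero_mem' := by
    show eps S (posP 0) = eps S (negP 0)
    have h1 : posP (0 : {x // x ∈ S} → ℤ) = 0 := by funext i; simp [posP]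
    have h2 : negP (0 : {x // x ∈ S} → ℤ) = 0 := by funext i; simp [negP]
    rw [h1, h2]
  add_mem' := by
    intro d e hd he
    have hvec : posP (d + e) + (negP d + negP e) = negP (d + e) + (posP d + posP e) := by
      funext i
      simp only [Pi.add_apply, posP, negP, neg_add_rev]
      omega
    have h2 := congrArg (eps S) hvec
    rw [eps_add, eps_add, eps_add, eps_add] at h2
    rw [Set.mem_setOf_eq] at hd he ⊢
    rw [hd, he] at h2
    exact add_right_cancel h2
  neg_mem' := by
    intro d hd
    have h1 : posP (-d) = negP d := by funext i; simp [posP, negP]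
    have h2 : negP (-d) = posP d := by funext i; simp [posP, negP]
    rw [Set.mem_setOf_eq] at hd ⊢
    rw [h1, h2, hd]

lemma mem_Rel {d : {x // x ∈ S} → ℤ} : d ∈ Rel S ↔ eps S (posP d) = eps S (negP d) :=
  Iff.rfl

variable {S}

lemma sub_mem_Rel {c c' : {x // x ∈ S} → ℕ} (h : eps S c = eps S c') :
    ZN c - ZN c' ∈ Rel S := by
  have hvec : posP (ZN c - ZN c') + c' = negP (ZN c - ZN c') + c := by
    funext i
    simp only [Pi.add_apply, Pi.sub_apply, posP, negP, ZN]
    omega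
  have h2 := congrArg (eps S) hvec
  rw [eps_add, eps_add] at h2
  rw [h] at h2
  exact (mem_Rel S).mpr (add_right_cancel h2)

end Relations

section Face

variable {P : Type*} [AddCommMonoid P] [IsCancelAdd P]

def IsPFace (F : Set P) : Prop :=
  (0:P) ∈ F ∧ (∀ a b, a ∈ F → b ∈ F → a + b ∈ F) ∧ ∀ a b : P, a + b ∈ F → a ∈ F

namespace IsPFace

variable {F : Set P} (hF : IsPFace F)
include hF

lemma summand_right {a b : P} (h : a + b ∈ F) : b ∈ F :=
  hF.2.2 b a (by rwa [add_comm a b] at h)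

lemma nsmul_mem {n : ℕ} {a : P} (h : a ∈ F) : n • a ∈ F := by
  induction n with
  | zero => simpa using hF.1
  | succ m ih => rw [succ_nsmul]; exact hF.2.1 _ _ ih h

lemma mem_of_nsmul {n : ℕ} {a : P} (hn : n ≠ 0) (h : n • a ∈ F) : a ∈ F := by
  obtain ⟨m, rfl⟩ := Nat.exists_eq_succ_of_ne_zero hn
  rw [succ_nsmul] at h
  exact hF.summand_right h

lemma eps_mem {S : Finset P} {c : {x // x ∈ S} → ℕ}
    (h : ∀ i, c i ≠ 0 → (i : P) ∈ F) : eps S c ∈ F := by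
  unfold eps
  refine Finset.sum_induction _ (· ∈ F) (fun a b ha hb => hF.2.1 a b ha hb) hF.1 ?_
  intro i _
  by_cases hc : c i = 0
  · rw [hc, zero_smul]; exact hF.1
  · exact hF.nsmul_mem (h i hc)

lemma support_mem {S : Finset P} {c : {x // x ∈ S} → ℕ}
    (h : eps S c ∈ F) : ∀ i, c i ≠ 0 → (i : P) ∈ F := by
  classical
  intro i hc
  have hsplit : c i • (i : P) + ∑ j ∈ Finset.univ.erase i, c j • (j : P) = eps S c := by
    rw [eps]; exact Finset.add_sum_erase _ (fun j => c j • (j : P)) (Finset.mem_univ i)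
  rw [← hsplit] at h
  exact hF.mem_of_nsmul hc (hF.2.2 _ _ h)

end IsPFace

end Face

end Presentation

end Stmt16Aux

namespace Stmt16Aux

open scoped NNReal

section Separation

variable {P : Type*} [AddCommMonoid P] [IsCancelAdd P] {S : Finset P}

theorem separation (hS : AddSubmonoid.closure (S : Set P) = ⊤)
    {F : Set P} (hF : IsPFace F) {f0 : P} (hf0 : f0 ∉ F) :
    ∃ φ : P → ℝ≥0, (φ 0 = 0 ∧ ∀ a b, φ (a + b) = φ a + φ b) ∧
      (∀ f ∈ F, φ f = 0) ∧ φ f0 ≠ 0 := by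
  classical
  set ι := {x // x ∈ S}
  -- generators of the relation module
  have hfg : ((Rel S).toIntSubmodule).FG := IsNoetherian.noetherian _
  obtain ⟨T, hT⟩ := hfg
  -- representations
  choose rep hrep using eps_surj hS
  set c0 : ι → ℕ := rep f0 with hc0def
  -- basis-like vectors
  set es : ι → (ι → ℚ) := fun s i => if i = s then 1 else 0 with hesdef
  have dot_es : ∀ (y : ι → ℚ) (s : ι), dot y (es s) = y s := by
    intro y s
    unfold dot
    rw [Finset.sum_eq_single s]
    · simp [hesdef]
    · intro b _ hb; simp [hesdef, hb]
    · intro h; exact absurd (Finset.mem_univ _) h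
  set L : List (ι → ℚ) :=
    T.toList.map QZ ++ T.toList.map (fun t => -QZ t)
      ++ Finset.univ.toList.map es
      ++ (Finset.univ.filter (fun s : ι => (s : P) ∈ F)).toList.map (fun s => -es s)
    with hLdef
  rcases farkas L (-QN c0) with hin | ⟨y, hyL, hyx⟩
  · -- the cone case is contradictory
    exfalso
    set Good : (ι → ℚ) → Prop := fun v => ∃ N : ℕ, 0 < N ∧ ∃ d μ : ι → ℤ, ∃ ν : ι → ℕ,
      d ∈ Rel S ∧ (∀ s : ι, (s : P) ∉ F → μ s = 0) ∧
      (N : ℚ) • v = QZ d + QZ μ + QN ν with hGdef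
    have hGood0 : Good 0 := by
      refine ⟨1, one_pos, 0, 0, 0, (Rel S).zero_mem, fun s _ => rfl, ?_⟩
      rw [QZ_zero, QN_zero]; simp
    have hGoodAdd : ∀ u v, Good u → Good v → Good (u + v) := by
      rintro u v ⟨N1, hN1, d1, μ1, ν1, hd1, hμ1, he1⟩ ⟨N2, hN2, d2, μ2, ν2, hd2, hμ2, he2⟩
      refine ⟨N1 * N2, Nat.mul_pos hN1 hN2,
        (N2 : ℤ) • d1 + (N1 : ℤ) • d2, (N2 : ℤ) • μ1 + (N1 : ℤ) • μ2, N2 • ν1 + N1 • ν2,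
        (Rel S).add_mem ((Rel S).zsmul_mem hd1 _) ((Rel S).zsmul_mem hd2 _),
        fun s hs => by simp [hμ1 s hs, hμ2 s hs], ?_⟩
      funext i
      have e1 := congrFun he1 i
      have e2 := congrFun he2 i
      simp only [Pi.smul_apply, Pi.add_apply, QZ, QN, smul_eq_mul] at e1 e2 ⊢
      push_cast at e1 e2 ⊢
      nlinarith [e1, e2]
    have hGoodSmul : ∀ (t : ℚ), 0 ≤ t → ∀ v, Good v → Good (t • v) := by
      rintro t ht v ⟨N, hN, d, μ, ν, hd, hμ, he⟩
      refine ⟨N * t.den, Nat.mul_pos hN t.den_pos,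
        t.num • d, t.num • μ, t.num.toNat • ν,
        (Rel S).zsmul_mem hd _, fun s hs => by simp [hμ s hs], ?_⟩
      funext i
      have e1 := congrFun he i
      have hden : (t.den : ℚ) * t = t.num := by
        rw [mul_comm]; exact_mod_cast Rat.mul_den_eq_num t
      have hnum : ((t.num.toNat : ℤ) : ℚ) = (t.num : ℚ) := by
        exact_mod_cast congrArg (fun z : ℤ => (z : ℚ)) (Int.toNat_of_nonneg (Rat.num_nonneg.mpr ht))
      simp only [Pi.smul_apply, Pi.add_apply, QZ, QN, smul_eq_mul] at e1 ⊢
      push_cast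
      push_cast at e1
      rw [show ((t.num.toNat : ℕ) : ℚ) = (t.num : ℚ) by exact_mod_cast hnum]
      linear_combination ((t.den : ℚ) * t) * e1 + ((d i : ℚ) + (μ i : ℚ) + (ν i : ℚ)) * hden
    have hGoodL : ∀ a ∈ L, Good a := by
      intro a ha
      rw [hLdef] at ha
      simp only [List.mem_append, List.mem_map, Finset.mem_toList, Finset.mem_filter,
        Finset.mem_univ, true_and] at ha
      rcases ha with ((⟨t, htT, rfl⟩ | ⟨t, htT, rfl⟩) | ⟨s, _, rfl⟩) | ⟨s, hsF, rfl⟩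
      · have htR : t ∈ Rel S := by
          have h1 : t ∈ Submodule.span ℤ (T : Set _) := Submodule.subset_span (Finset.mem_coe.mpr htT)
          rw [hT] at h1
          simpa using (Set.ext_iff.mp (AddSubgroup.coe_toIntSubmodule (Rel S)) t).mp h1
        exact ⟨1, one_pos, t, 0, 0, htR, fun s _ => rfl, by rw [QZ_zero, QN_zero]; simp⟩
      · have htR : (-t) ∈ Rel S := by
          have h1 : t ∈ Submodule.span ℤ (T : Set _) := Submodule.subset_span (Finset.mem_coe.mpr htT)
          rw [hT] at h1
          exact (Rel S).neg_mem
            ((Set.ext_iff.mp (AddSubgroup.coe_toIntSubmodule (Rel S)) t).mp h1)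
        refine ⟨1, one_pos, -t, 0, 0, htR, fun s _ => rfl, ?_⟩
        rw [QZ_zero, QN_zero]
        funext i; simp [QZ]
      · by_cases hsF : (s : P) ∈ F
        · refine ⟨1, one_pos, 0, fun i => if i = s then 1 else 0, 0, (Rel S).zero_mem,
            fun u hu => by simp [show u ≠ s from fun h => hu (h ▸ hsF)], ?_⟩
          rw [QZ_zero, QN_zero]
          funext i; by_cases hi : i = s <;> simp [QZ, hesdef, hi]
        · refine ⟨1, one_pos, 0, 0, fun i => if i = s then 1 else 0, (Rel S).zero_mem,
            fun u _ => rfl, ?_⟩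
          rw [QZ_zero]
          funext i; by_cases hi : i = s <;> simp [QN, hesdef, hi]
      · refine ⟨1, one_pos, 0, fun i => if i = s then -1 else 0, 0, (Rel S).zero_mem,
          fun u hu => by simp [show u ≠ s from fun h => hu (h ▸ hsF)], ?_⟩
        rw [QZ_zero, QN_zero]
        funext i; by_cases hi : i = s <;> simp [QZ, hesdef, hi]
    have hGoodx : Good (-QN c0) := inCone_closure hGood0 hGoodAdd hGoodSmul L _ hGoodL hin
    obtain ⟨N, hN, d, μ, ν, hd, hμ, he⟩ := hGoodx
    -- componentwise integral identity
    have hcomp : ∀ i : ι, d i + μ i + (ν i : ℤ) + (N : ℤ) * (c0 i : ℤ) = 0 := by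
      intro i
      have e1 := congrFun he i
      simp only [Pi.smul_apply, Pi.add_apply, Pi.neg_apply, QZ, QN, smul_eq_mul] at e1
      have : ((d i + μ i + (ν i : ℤ) + (N : ℤ) * (c0 i : ℤ) : ℤ) : ℚ) = 0 := by
        push_cast
        push_cast at e1
        linarith [e1]
      exact_mod_cast this
    -- natural vector identity
    have hvec : posP d + (posP μ + (N • c0 + ν)) = negP d + negP μ := by
      funext i
      have := hcomp i
      simp only [Pi.add_apply, Pi.smul_apply, posP, negP, smul_eq_mul]
      omega
    have heps := congrArg (eps S) hvec
    rw [eps_add, eps_add, eps_add, eps_add, eps_nsmul, hrep f0] at heps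
    rw [(mem_Rel S).mp hd] at heps
    have hcancel : eps S (posP μ) + (N • f0 + eps S ν) = eps S (negP μ) :=
      add_left_cancel heps
    have hnegμF : eps S (negP μ) ∈ F := by
      refine hF.eps_mem fun i hi => ?_
      by_contra hiF
      have := hμ i hiF
      simp [negP, this] at hi
    rw [← hcancel] at hnegμF
    have h1 : N • f0 + eps S ν ∈ F := hF.summand_right hnegμF
    have h2 : N • f0 ∈ F := hF.2.2 _ _ h1
    exact hf0 (hF.mem_of_nsmul hN.ne' h2)
  · -- the functional case: build φ
    have hyT : ∀ t ∈ T, dot y (QZ t) = 0 := by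
      intro t htT
      have h1 : 0 ≤ dot y (QZ t) := hyL _ (by
        rw [hLdef]
        exact List.mem_append_left _ (List.mem_append_left _ (List.mem_append_left _
          (List.mem_map.mpr ⟨t, Finset.mem_toList.mpr htT, rfl⟩))))
      have h2 : 0 ≤ dot y (-QZ t) := hyL _ (by
        rw [hLdef]
        exact List.mem_append_left _ (List.mem_append_left _ (List.mem_append_right _
          (List.mem_map.mpr ⟨t, Finset.mem_toList.mpr htT, rfl⟩))))
      rw [dot_neg_right] at h2
      linarith
    have hyR : ∀ d ∈ Rel S, dot y (QZ d) = 0 := by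
      intro d hd
      have hd' : d ∈ Submodule.span ℤ (T : Set _) := by
        rw [hT]; exact (Set.ext_iff.mp (AddSubgroup.coe_toIntSubmodule (Rel S)) d).mpr hd
      refine Submodule.span_induction (p := fun d _ => dot y (QZ d) = 0) ?_ ?_ ?_ ?_ hd'
      · intro t ht; exact hyT t (Finset.mem_coe.mp ht)
      · show dot y (QZ 0) = 0
        rw [QZ_zero, dot_zero_right]
      · intro u v _ _ hu hv
        show dot y (QZ (u + v)) = 0
        rw [QZ_add, dot_add_right, hu, hv, add_zero]
      · intro z u _ hu
        show dot y (QZ (z • u)) = 0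
        rw [QZ_zsmul, dot_smul_right, hu, mul_zero]
    have hy1 : ∀ s : ι, 0 ≤ y s := by
      intro s
      have h1 : 0 ≤ dot y (es s) := hyL _ (by
        rw [hLdef]
        exact List.mem_append_left _ (List.mem_append_right _
          (List.mem_map.mpr ⟨s, Finset.mem_toList.mpr (Finset.mem_univ s), rfl⟩)))
      rwa [dot_es] at h1
    have hy2 : ∀ s : ι, (s : P) ∈ F → y s = 0 := by
      intro s hsF
      have h2 : 0 ≤ dot y (-es s) := hyL _ (by
        rw [hLdef]
        exact List.mem_append_right _ (List.mem_map.mpr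
          ⟨s, Finset.mem_toList.mpr (Finset.mem_filter.mpr ⟨Finset.mem_univ s, hsF⟩), rfl⟩))
      rw [dot_neg_right, dot_es] at h2
      have := hy1 s
      linarith
    rw [dot_neg_right] at hyx
    have hyc0 : 0 < dot y (QN c0) := by linarith
    -- the value function
    set val : P → ℚ := fun f => dot y (QN (rep f)) with hvaldef
    have hval_eq : ∀ (c : ι → ℕ) (f : P), eps S c = f → dot y (QN c) = val f := by
      intro c f hc
      have hrel : ZN c - ZN (rep f) ∈ Rel S := sub_mem_Rel (by rw [hc, hrep f])
      have := hyR _ hrel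
      rw [QZ_sub, QZ_ZN, QZ_ZN, dot_sub_right] at this
      rw [hvaldef]
      linarith
    have hval_nonneg : ∀ f, 0 ≤ val f := by
      intro f
      have hv : val f = ∑ i : ι, y i * QN (rep f) i := rfl
      rw [hv]
      refine Finset.sum_nonneg fun i _ => mul_nonneg (hy1 i) ?_
      show (0:ℚ) ≤ ((rep f i : ℕ) : ℚ)
      positivity
    have hval_add : ∀ a b, val (a + b) = val a + val b := by
      intro a b
      have h1 : eps S (rep a + rep b) = a + b := by rw [eps_add, hrep, hrep]
      have h2 := hval_eq _ _ h1
      rw [QN_add, dot_add_right] at h2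
      rw [← h2, hvaldef]
    have hval_zero : val 0 = 0 := by
      have h1 := hval_eq 0 0 (eps_zero S)
      rw [QN_zero, dot_zero_right] at h1
      exact h1.symm
    refine ⟨fun f => Real.toNNReal ((val f : ℝ)), ⟨?_, ?_⟩, ?_, ?_⟩
    · show Real.toNNReal ((val 0 : ℝ)) = 0
      rw [hval_zero]; simp
    · intro a b
      show Real.toNNReal ((val (a+b) : ℝ)) =
        Real.toNNReal ((val a : ℝ)) + Real.toNNReal ((val b : ℝ))
      rw [hval_add]
      push_cast
      exact Real.toNNReal_add (by exact_mod_cast hval_nonneg a) (by exact_mod_cast hval_nonneg b)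
    · intro f hf
      show Real.toNNReal ((val f : ℝ)) = 0
      have hsupp := hF.support_mem (S := S) (c := rep f) (by rw [hrep]; exact hf)
      have hvf : val f = 0 := by
        have hv : val f = ∑ i : ι, y i * QN (rep f) i := rfl
        rw [hv]
        refine Finset.sum_eq_zero fun i _ => ?_
        by_cases hci : rep f i = 0
        · have : QN (rep f) i = 0 := by simp [QN, hci]
          rw [this, mul_zero]
        · rw [hy2 i (hsupp i hci), zero_mul]
      rw [hvf]; simp
    · show Real.toNNReal ((val f0 : ℝ)) ≠ 0
      have hpos : (0 : ℝ) < ((val f0 : ℝ)) := by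
        have hv : val f0 = dot y (QN c0) := rfl
        rw [hv]; exact_mod_cast hyc0
      exact ne_of_gt (Real.toNNReal_pos.mpr hpos)

end Separation

end Stmt16Aux


namespace Stmt16

open Stmt16Aux
open scoped NNReal ENNReal

variable {P : Type*} [AddCommMonoid P] [IsCancelAdd P]

lemma cone_zero_mem : (0 : P → ℝ≥0) ∈ cone P :=
  ⟨rfl, fun _ _ => (add_zero 0).symm⟩

lemma cone_add_mem {q q' : P → ℝ≥0} (hq : q ∈ cone P) (hq' : q' ∈ cone P) :
    q + q' ∈ cone P := by
  refine ⟨?_, fun a b => ?_⟩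
  · show q 0 + q' 0 = 0
    rw [hq.1, hq'.1, add_zero]
  · show q (a+b) + q' (a+b) = (q a + q' a) + (q b + q' b)
    rw [hq.2, hq'.2]; ring

/-- The dual face in `P` of a subset `κ` of the cone. -/
def dualF (κ : Set (P → ℝ≥0)) : Set P := {f | ∀ φ ∈ κ, φ f = 0}

lemma isPFace_dualF {κ : Set (P → ℝ≥0)} (hκ : κ ⊆ cone P) : IsPFace (dualF κ) := by
  refine ⟨fun φ hφ => (hκ hφ).1, fun a b ha hb φ hφ => ?_, fun a b hab φ hφ => ?_⟩
  · rw [(hκ hφ).2, ha φ hφ, hb φ hφ, add_zero]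
  · have := hab φ hφ
    rw [(hκ hφ).2] at this
    exact (add_eq_zero.mp this).1

lemma isPFace_finite {h : P → ℝ≥0∞} (hh : h ∈ extCone P) : IsPFace {f : P | h f ≠ ⊤} := by
  refine ⟨?_, fun a b ha hb => ?_, fun a b hab => ?_⟩
  · show h 0 ≠ ⊤; rw [hh.1]; exact ENNReal.zero_ne_top
  · show h (a+b) ≠ ⊤
    rw [hh.2]
    exact ENNReal.add_ne_top.mpr ⟨ha, hb⟩
  · show h a ≠ ⊤
    have : h (a+b) ≠ ⊤ := hab
    rw [hh.2] at this
    exact (ENNReal.add_ne_top.mp this).1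

variable {S : Finset P}

/-- Induction over all of `P` from the generators. -/
lemma pred_all (hS : AddSubmonoid.closure (S : Set P) = ⊤) (pred : P → Prop)
    (h0 : pred 0) (hadd : ∀ a b, pred a → pred b → pred (a + b))
    (hgen : ∀ s : {x // x ∈ S}, pred (s : P)) : ∀ f, pred f := by
  intro f
  obtain ⟨c, rfl⟩ := eps_surj hS f
  unfold eps
  refine Finset.sum_induction _ pred hadd h0 fun i _ => ?_
  generalize c i = n
  induction n with
  | zero => simpa using h0
  | succ m ih => rw [succ_nsmul]; exact hadd _ _ ih (hgen i)

/-- An interior point of a face `κ`. -/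
lemma exists_interior (hS : AddSubmonoid.closure (S : Set P) = ⊤)
    {κ : Set (P → ℝ≥0)} (hκ : IsFace P κ) :
    ∃ φ ∈ κ, ∀ f : P, f ∈ dualF κ ↔ φ f = 0 := by
  classical
  set ι := {x // x ∈ S}
  have hchoice : ∀ s : ι, ∃ ψ ∈ κ, ((s : P) ∉ dualF κ → ψ (s : P) ≠ 0) := by
    intro s
    by_cases hs : (s : P) ∈ dualF κ
    · exact ⟨0, hκ.2.1, fun h => absurd hs h⟩
    · simp only [dualF, Set.mem_setOf_eq, not_forall] at hs
      obtain ⟨ψ, hψκ, hψs⟩ := hs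
      exact ⟨ψ, hψκ, fun _ => hψs⟩
  choose ψ hψκ hψne using hchoice
  set φ : P → ℝ≥0 := ∑ s : ι, ψ s with hφdef
  have hφκ : φ ∈ κ := by
    rw [hφdef]
    exact Finset.sum_induction _ (· ∈ κ) (fun a b ha hb => hκ.2.2.1 a ha b hb) hκ.2.1
      fun s _ => hψκ s
  have hφapp : ∀ f, φ f = ∑ s : ι, ψ s f := by
    intro f; rw [hφdef]; exact Finset.sum_apply f Finset.univ ψ
  refine ⟨φ, hφκ, fun f => ⟨fun hf => hf φ hφκ, ?_⟩⟩
  revert f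
  refine pred_all hS (fun f => φ f = 0 → f ∈ dualF κ) (fun _ => (isPFace_dualF hκ.1).1)
    (fun a b ha hb hab => ?_) (fun s hs => ?_)
  · rw [(hκ.1 hφκ).2] at hab
    obtain ⟨h1, h2⟩ := add_eq_zero.mp hab
    exact (isPFace_dualF hκ.1).2.1 a b (ha h1) (hb h2)
  · by_contra hsno
    have hzero : ψ s (s : P) = 0 := by
      rw [hφapp] at hs
      exact (Finset.sum_eq_zero_iff.mp hs) s (Finset.mem_univ s)
    exact hψne s hsno hzero

/-- Anything in the cone vanishing on the dual face belongs to the face. -/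
lemma mem_face_of_vanish (hS : AddSubmonoid.closure (S : Set P) = ⊤)
    {κ : Set (P → ℝ≥0)} (hκ : IsFace P κ) {ψ : P → ℝ≥0} (hψ : ψ ∈ cone P)
    (hv : ∀ f ∈ dualF κ, ψ f = 0) : ψ ∈ κ := by
  classical
  obtain ⟨φ, hφκ, hφint⟩ := exists_interior hS hκ
  have hφc : φ ∈ cone P := hκ.1 hφκ
  -- find a uniform multiple
  have hNs : ∀ s : {x // x ∈ S}, ∃ n : ℕ, ψ (s : P) ≤ n • φ (s : P) := by
    intro s
    by_cases hs : (s : P) ∈ dualF κ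
    · exact ⟨0, by rw [hv _ hs]; exact zero_le⟩
    · have hφs : φ (s : P) ≠ 0 := fun h => hs ((hφint _).mpr h)
      obtain ⟨n, hn⟩ := exists_nat_ge (ψ (s : P) / φ (s : P))
      exact ⟨n, by
        rw [nsmul_eq_mul]
        exact (div_le_iff₀ (pos_iff_ne_zero.mpr hφs)).mp hn⟩
  choose N hN using hNs
  set n : ℕ := Finset.univ.sup N with hndef
  have hNn : ∀ s : {x // x ∈ S}, ψ (s : P) ≤ n • φ (s : P) := by
    intro s
    refine le_trans (hN s) ?_
    exact nsmul_le_nsmul_left zero_le (Finset.le_sup (Finset.mem_univ s))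
  have hle : ∀ f, ψ f ≤ n • φ f := by
    refine pred_all hS (fun f => ψ f ≤ n • φ f)
      (by show ψ 0 ≤ n • φ 0; rw [hψ.1, hφc.1]; simp)
      (fun a b ha hb => ?_) hNn
    show ψ (a+b) ≤ n • φ (a+b)
    rw [hψ.2, hφc.2, smul_add]
    exact add_le_add ha hb
  set ρ : P → ℝ≥0 := fun f => n • φ f - ψ f with hρdef
  have hρc : ρ ∈ cone P := by
    constructor
    · show n • φ 0 - ψ 0 = 0
      rw [hψ.1, hφc.1]; simp
    · intro a b
      show n • φ (a+b) - ψ (a+b) = (n • φ a - ψ a) + (n • φ b - ψ b)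
      rw [hψ.2, hφc.2, smul_add, tsub_add_tsub_comm (hle a) (hle b)]
  have hsum : ψ + ρ = fun f => n • φ f := by
    funext f
    show ψ f + (n • φ f - ψ f) = n • φ f
    exact add_tsub_cancel_of_le (hle f)
  have hnφ : (fun f => n • φ f) ∈ κ := by
    induction n with
    | zero => convert hκ.2.1 using 1; funext f; simp
    | succ m ih =>
        have : (fun f => (m+1) • φ f) = (fun f => m • φ f) + φ := by
          funext f; show (m+1) • φ f = m • φ f + φ f; rw [succ_nsmul]
        rw [this]
        exact hκ.2.2.1 _ ih _ hφκ
  exact (hκ.2.2.2 ψ hψ ρ hρc (by rw [hsum]; exact hnφ)).1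

/-- Two cone elements agreeing on the dual face differ by elements of the face. -/
lemma exists_translation (hS : AddSubmonoid.closure (S : Set P) = ⊤)
    {κ : Set (P → ℝ≥0)} (hκ : IsFace P κ) {q q' : P → ℝ≥0}
    (hq : q ∈ cone P) (hq' : q' ∈ cone P)
    (hagree : ∀ f ∈ dualF κ, q f = q' f) :
    ∃ k ∈ κ, ∃ k' ∈ κ, q + k = q' + k' := by
  classical
  obtain ⟨φ, hφκ, hφint⟩ := exists_interior hS hκ
  have hφc : φ ∈ cone P := hκ.1 hφκ
  have hNs : ∀ s : {x // x ∈ S}, ∃ m : ℕ, q' (s : P) ≤ q (s : P) + m • φ (s : P) := by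
    intro s
    by_cases hs : (s : P) ∈ dualF κ
    · exact ⟨0, by rw [← hagree _ hs]; simp⟩
    · have hφs : φ (s : P) ≠ 0 := fun h => hs ((hφint _).mpr h)
      obtain ⟨m, hm⟩ := exists_nat_ge (q' (s : P) / φ (s : P))
      refine ⟨m, le_trans ?_ le_add_self⟩
      rw [nsmul_eq_mul]
      exact (div_le_iff₀ (pos_iff_ne_zero.mpr hφs)).mp hm
  choose N hN using hNs
  set n : ℕ := Finset.univ.sup N with hndef
  have hNn : ∀ s : {x // x ∈ S}, q' (s : P) ≤ q (s : P) + n • φ (s : P) := by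
    intro s
    refine le_trans (hN s) (add_le_add (le_refl _) ?_)
    exact nsmul_le_nsmul_left zero_le (Finset.le_sup (Finset.mem_univ s))
  have hle : ∀ f, q' f ≤ q f + n • φ f := by
    refine pred_all hS (fun f => q' f ≤ q f + n • φ f)
      (by show q' 0 ≤ q 0 + n • φ 0; rw [hq.1, hq'.1, hφc.1]; simp)
      (fun a b ha hb => ?_) hNn
    show q' (a+b) ≤ q (a+b) + n • φ (a+b)
    rw [hq.2, hq'.2, hφc.2, smul_add]
    calc q' a + q' b ≤ (q a + n • φ a) + (q b + n • φ b) := add_le_add ha hb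
      _ = q a + q b + (n • φ a + n • φ b) := by ring
  set k : P → ℝ≥0 := fun f => n • φ f with hkdef
  have hkκ : k ∈ κ := by
    rw [hkdef]
    induction n with
    | zero => convert hκ.2.1 using 1; funext f; simp
    | succ m ih =>
        have : (fun f => (m+1) • φ f) = (fun f => m • φ f) + φ := by
          funext f; show (m+1) • φ f = m • φ f + φ f; rw [succ_nsmul]
        rw [this]
        exact hκ.2.2.1 _ ih _ hφκ
  set k' : P → ℝ≥0 := fun f => (q f + n • φ f) - q' f with hk'def
  have hk'c : k' ∈ cone P := by
    constructor
    · show (q 0 + n • φ 0) - q' 0 = 0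
      rw [hq.1, hq'.1, hφc.1]; simp
    · intro a b
      show (q (a+b) + n • φ (a+b)) - q' (a+b) =
        ((q a + n • φ a) - q' a) + ((q b + n • φ b) - q' b)
      rw [hq.2, hq'.2, hφc.2, smul_add, tsub_add_tsub_comm (hle a) (hle b)]
      congr 1
      ring
  have hk'κ : k' ∈ κ := by
    refine mem_face_of_vanish hS hκ hk'c fun f hf => ?_
    show (q f + n • φ f) - q' f = 0
    rw [hagree _ hf, hf φ hφκ]
    simp
  refine ⟨k, hkκ, k', hk'κ, ?_⟩
  funext f
  show q f + n • φ f = q' f + ((q f + n • φ f) - q' f)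
  rw [add_tsub_cancel_of_le (hle f)]


section Extension

lemma hom_sum {α : Type*} {h : P → ℝ≥0∞} (hh : h ∈ extCone P) (s : Finset α) (g : α → P) :
    h (∑ a ∈ s, g a) = ∑ a ∈ s, h (g a) := by
  classical
  induction s using Finset.cons_induction with
  | empty => simpa using hh.1
  | cons a s ha ih => rw [Finset.sum_cons, Finset.sum_cons, hh.2, ih]

lemma hom_nsmul {h : P → ℝ≥0∞} (hh : h ∈ extCone P) (n : ℕ) (a : P) :
    h (n • a) = n • h a := by
  induction n with
  | zero => simpa using hh.1
  | succ m ih => rw [succ_nsmul, succ_nsmul, hh.2, ih]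

lemma ZN_add {ι : Type*} (c d : ι → ℕ) : ZN (c + d) = ZN c + ZN d := by
  funext i; simp [ZN]

lemma extension (hS : AddSubmonoid.closure (S : Set P) = ⊤)
    {h : P → ℝ≥0∞} (hh : h ∈ extCone P) :
    ∃ q ∈ cone P, ∀ f : P, h f ≠ ⊤ → (q f : ℝ≥0∞) = h f := by
  classical
  set ι := {x // x ∈ S}
  set F : Set P := {f | h f ≠ ⊤} with hFdef
  have hFface : IsPFace F := isPFace_finite hh
  -- the big positive functional vanishing on F
  have hchoice : ∀ s : ι, ∃ ψ : P → ℝ≥0,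
      (ψ 0 = 0 ∧ ∀ a b, ψ (a + b) = ψ a + ψ b) ∧ (∀ f ∈ F, ψ f = 0) ∧
        ((s : P) ∉ F → ψ (s : P) ≠ 0) := by
    intro s
    by_cases hs : (s : P) ∈ F
    · exact ⟨0, ⟨rfl, fun _ _ => (add_zero 0).symm⟩, fun _ _ => rfl, fun hc => absurd hs hc⟩
    · obtain ⟨ψ, hψhom, hψvan, hψs⟩ := separation hS hFface hs
      exact ⟨ψ, hψhom, hψvan, fun _ => hψs⟩
  choose ψ hψhom hψvan hψne using hchoice
  set Ψ : P → ℝ≥0 := ∑ s : ι, ψ s with hΨdef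
  have hΨc : Ψ ∈ cone P := by
    rw [hΨdef]
    exact Finset.sum_induction _ (· ∈ cone P) (fun a b ha hb => cone_add_mem ha hb)
      cone_zero_mem fun s _ => ⟨(hψhom s).1, (hψhom s).2⟩
  have hΨapp : ∀ f, Ψ f = ∑ s : ι, ψ s f := by
    intro f; rw [hΨdef]; exact Finset.sum_apply f Finset.univ ψ
  have hΨvan : ∀ f ∈ F, Ψ f = 0 := by
    intro f hf
    rw [hΨapp]
    exact Finset.sum_eq_zero fun s _ => hψvan s f hf
  have hΨne : ∀ s : ι, (s : P) ∉ F → Ψ (s : P) ≠ 0 := by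
    intro s hs hzero
    rw [hΨapp] at hzero
    exact hψne s hs ((Finset.sum_eq_zero_iff.mp hzero) s (Finset.mem_univ s))
  -- submodules of the presentation lattice
  set M := ι → ℤ
  set R' : Submodule ℤ M := AddSubgroup.toIntSubmodule (Rel S) with hR'def
  have hR'mem : ∀ d : M, d ∈ R' ↔ d ∈ Stmt16Aux.Rel S := fun d =>
    Set.ext_iff.mp (AddSubgroup.coe_toIntSubmodule (Rel S)) d
  set W : Submodule ℤ M :=
    { carrier := {c | ∀ i : ι, (i : P) ∉ F → c i = 0}
      add_mem' := fun {a b} ha hb i hi => by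
        show a i + b i = 0
        rw [ha i hi, hb i hi, add_zero]
      zero_mem' := fun i _ => rfl
      smul_mem' := fun z {c} hc i hi => by
        show z * c i = 0
        rw [hc i hi, mul_zero] } with hWdef
  -- the base functional
  set val0 : M →+ ℝ := AddMonoidHom.mk' (fun c => ∑ i : ι, (c i : ℝ) * (h (i : P)).toReal)
    (fun c d => by
      rw [← Finset.sum_add_distrib]
      refine Finset.sum_congr rfl fun i _ => ?_
      show ((c i + d i : ℤ) : ℝ) * _ = _
      push_cast
      ring) with hval0def
  have hval0apply : ∀ c : M, val0 c = ∑ i : ι, (c i : ℝ) * (h (i : P)).toReal :=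
    fun c => rfl
  -- the key computation on F-supported natural vectors
  have hkey : ∀ c : ι → ℕ, (∀ i : ι, c i ≠ 0 → (i : P) ∈ F) →
      h (eps S c) ≠ ⊤ ∧ (h (eps S c)).toReal = val0 (ZN c) := by
    intro c hc
    have h1 : h (eps S c) = ∑ i : ι, h (c i • (i : P)) := hom_sum hh _ _
    have h2 : ∀ i : ι, h (c i • (i : P)) = c i • h (i : P) := fun i => hom_nsmul hh _ _
    have hterm : ∀ i : ι, c i • h (i : P) ≠ ⊤ := by
      intro i
      by_cases hci : c i = 0
      · rw [hci, zero_smul]; exact ENNReal.zero_ne_top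
      · rw [nsmul_eq_mul]
        exact ENNReal.mul_ne_top (ENNReal.natCast_ne_top _) (hc i hci)
    constructor
    · rw [h1]
      refine (ENNReal.sum_ne_top).mpr fun i _ => ?_
      rw [h2 i]; exact hterm i
    · rw [h1]
      have h3 : ∀ i ∈ Finset.univ, h (c i • (i : P)) ≠ ⊤ := fun i _ => by
        rw [h2 i]; exact hterm i
      rw [ENNReal.toReal_sum h3, hval0apply]
      refine Finset.sum_congr rfl fun i _ => ?_
      rw [h2 i, nsmul_eq_mul, ENNReal.toReal_mul]
      have hc1 : ((c i : ℝ≥0∞)).toReal = (c i : ℝ) := by simp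
      have hc2 : ((ZN c i : ℤ) : ℝ) = (c i : ℝ) := by simp [ZN]
      rw [hc1, hc2]
  -- val0 vanishes on relations supported on F
  have hval0R : ∀ d : M, d ∈ Stmt16Aux.Rel S → d ∈ W → val0 d = 0 := by
    intro d hdR hdW
    have hsplit : d = ZN (posP d) - ZN (negP d) := by
      funext i
      show d i = ZN (posP d) i - ZN (negP d) i
      show d i = ((d i).toNat : ℤ) - ((-d i).toNat : ℤ)
      omega
    have hposW : ∀ i : ι, posP d i ≠ 0 → (i : P) ∈ F := by
      intro i hi
      by_contra hiF
      have h0 : d i = 0 := hdW i hiF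
      exact hi (by simp [posP, h0])
    have hnegW : ∀ i : ι, negP d i ≠ 0 → (i : P) ∈ F := by
      intro i hi
      by_contra hiF
      have h0 : d i = 0 := hdW i hiF
      exact hi (by simp [negP, h0])
    have hkp := hkey (posP d) hposW
    have hkn := hkey (negP d) hnegW
    rw [hsplit, map_sub, ← hkp.2, ← hkn.2, (mem_Rel S).mp hdR, sub_self]
  -- decomposition of the sup
  set H : Submodule ℤ M := R' ⊔ W with hHdef
  have hdec : ∀ x : ↥H, ∃ p : M × M, p.1 ∈ R' ∧ p.2 ∈ W ∧ (x : M) = p.1 + p.2 := by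
    intro x
    obtain ⟨y, hy, z, hz, hyz⟩ := Submodule.mem_sup.mp x.2
    exact ⟨(y, z), hy, hz, hyz.symm⟩
  choose dp hdp1 hdp2 hdp3 using hdec
  have wdiff : ∀ d w d' w' : M, d ∈ R' → w ∈ W → d' ∈ R' → w' ∈ W →
      d + w = d' + w' → val0 w = val0 w' := by
    intro d w d' w' hd hw hd' hw' heq
    have hsub : w - w' = d' - d := by
      have := congrArg (fun v => v - w' - d) heq
      linear_combination (norm := module) this
    have hR : w - w' ∈ Stmt16Aux.Rel S := by
      rw [← hR'mem]
      rw [hsub]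
      exact Submodule.sub_mem _ hd' hd
    have hWm : w - w' ∈ W := Submodule.sub_mem _ hw hw'
    have := hval0R _ hR hWm
    rw [map_sub] at this
    linarith
  -- build the hom on H and extend by divisibility of ℝ
  set ψH : ↥H →+ ℝ := AddMonoidHom.mk' (fun x => val0 (dp x).2) (fun x y => by
    have hxy : (dp (x + y)).1 + (dp (x + y)).2
        = ((dp x).1 + (dp y).1) + ((dp x).2 + (dp y).2) := by
      rw [← hdp3 (x + y)]
      have hx := hdp3 x
      have hy := hdp3 y
      push_cast
      rw [hx, hy]
      abel
    have := wdiff _ _ _ _ (hdp1 (x+y)) (hdp2 (x+y))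
      (Submodule.add_mem _ (hdp1 x) (hdp1 y)) (Submodule.add_mem _ (hdp2 x) (hdp2 y)) hxy
    show val0 (dp (x + y)).2 = val0 (dp x).2 + val0 (dp y).2
    rw [this, map_add]) with hψHdef
  obtain ⟨Z, hZ⟩ := Module.Baer.extension_property_addMonoidHom
    (Module.Baer.of_divisible ℝ) (H.subtype.toAddMonoidHom)
    (fun a b hab => Subtype.ext hab) ψH
  have hZapp : ∀ x : ↥H, Z (x : M) = val0 (dp x).2 := by
    intro x
    have := DFunLike.congr_fun hZ x
    exact this
  have hZR : ∀ d : M, d ∈ Stmt16Aux.Rel S → Z d = 0 := by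
    intro d hd
    have hdR' : d ∈ R' := (hR'mem d).mpr hd
    have hdH : d ∈ H := Submodule.mem_sup_left hdR'
    set x : ↥H := ⟨d, hdH⟩ with hxdef
    have hx := hZapp x
    have hw : val0 (dp x).2 = val0 0 :=
      wdiff _ _ _ _ (hdp1 x) (hdp2 x) hdR' (Submodule.zero_mem _)
        (by rw [← hdp3 x]; simp; rfl)
    rw [hw, map_zero] at hx
    exact hx
  have hZW : ∀ w : M, w ∈ W → Z w = val0 w := by
    intro w hw
    have hwH : w ∈ H := Submodule.mem_sup_right hw
    set x : ↥H := ⟨w, hwH⟩ with hxdef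
    have hx := hZapp x
    have hq : val0 (dp x).2 = val0 w :=
      wdiff _ _ _ _ (hdp1 x) (hdp2 x) (Submodule.zero_mem _) hw
        (by rw [← hdp3 x]; simp; rfl)
    rw [hq] at hx
    exact hx
  -- the (possibly negative) extension of h
  choose rep hrep using eps_surj hS
  set ℓ : P → ℝ := fun f => Z (ZN (rep f)) with hℓdef
  have hℓ0 : ℓ 0 = 0 := by
    have hrel : ZN (rep 0) - ZN 0 ∈ Stmt16Aux.Rel S := sub_mem_Rel (by rw [hrep, eps_zero])
    have := hZR _ hrel
    rw [map_sub] at this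
    have hZN0 : ZN (0 : ι → ℕ) = 0 := by funext i; simp [ZN]
    rw [hZN0, map_zero, sub_zero] at this
    exact this
  have hℓadd : ∀ a b, ℓ (a + b) = ℓ a + ℓ b := by
    intro a b
    have hrel : ZN (rep a + rep b) - ZN (rep (a + b)) ∈ Stmt16Aux.Rel S :=
      sub_mem_Rel (by rw [eps_add, hrep, hrep, hrep])
    have := hZR _ hrel
    rw [map_sub, ZN_add, map_add] at this
    show Z (ZN (rep (a+b))) = Z (ZN (rep a)) + Z (ZN (rep b))
    linarith
  have hℓF : ∀ f ∈ F, ℓ f = (h f).toReal := by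
    intro f hf
    have hsupp : ∀ i : ι, rep f i ≠ 0 → (i : P) ∈ F :=
      hFface.support_mem (by rw [hrep]; exact hf)
    have hWm : ZN (rep f) ∈ W := by
      intro i hi
      show ((rep f i : ℕ) : ℤ) = 0
      by_contra hne
      exact hi (hsupp i (by exact_mod_cast fun hc => hne (by rw [hc]; rfl)))
    have h1 : Z (ZN (rep f)) = val0 (ZN (rep f)) := hZW _ hWm
    have h2 := (hkey (rep f) hsupp).2
    rw [hrep] at h2
    show Z (ZN (rep f)) = (h f).toReal
    rw [h1, ← h2]
  -- positivity correction
  have hns : ∀ s : ι, ∃ m : ℕ, 0 ≤ ℓ (s : P) + m * (Ψ (s : P) : ℝ) := by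
    intro s
    by_cases hs : (s : P) ∈ F
    · refine ⟨0, ?_⟩
      rw [hℓF _ hs]
      positivity
    · have hpos : (0 : ℝ) < (Ψ (s : P) : ℝ) := by
        have := hΨne s hs
        positivity
      obtain ⟨m, hm⟩ := exists_nat_ge (-(ℓ (s : P)) / (Ψ (s : P) : ℝ))
      refine ⟨m, ?_⟩
      rw [div_le_iff₀ hpos] at hm
      linarith
  choose NN hNN using hns
  set n : ℕ := Finset.univ.sup NN with hndef
  have hNn : ∀ s : ι, 0 ≤ ℓ (s : P) + n * (Ψ (s : P) : ℝ) := by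
    intro s
    have h1 : (NN s : ℝ) * (Ψ (s : P) : ℝ) ≤ n * (Ψ (s : P) : ℝ) := by
      refine mul_le_mul_of_nonneg_right ?_ (by positivity)
      exact_mod_cast Finset.le_sup (Finset.mem_univ s)
    have := hNN s
    linarith
  have hpos : ∀ f, 0 ≤ ℓ f + n * (Ψ f : ℝ) := by
    refine pred_all hS (fun f => 0 ≤ ℓ f + n * (Ψ f : ℝ)) ?_ (fun a b ha hb => ?_) hNn
    · show 0 ≤ ℓ 0 + n * (Ψ 0 : ℝ)
      rw [hℓ0, hΨc.1]
      simp
    · show 0 ≤ ℓ (a+b) + n * (Ψ (a+b) : ℝ)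
      have hΨab : (Ψ (a+b) : ℝ) = (Ψ a : ℝ) + (Ψ b : ℝ) := by
        rw [hΨc.2]; push_cast; ring
      rw [hℓadd, hΨab]
      show (0:ℝ) ≤ ℓ a + ℓ b + n * ((Ψ a : ℝ) + (Ψ b : ℝ))
      have : ℓ a + ℓ b + (n:ℝ) * ((Ψ a : ℝ) + (Ψ b : ℝ))
          = (ℓ a + n * (Ψ a : ℝ)) + (ℓ b + n * (Ψ b : ℝ)) := by ring
      rw [this]
      exact add_nonneg ha hb
  refine ⟨fun f => Real.toNNReal (ℓ f + n * (Ψ f : ℝ)), ⟨?_, ?_⟩, ?_⟩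
  · show Real.toNNReal (ℓ 0 + n * (Ψ 0 : ℝ)) = 0
    rw [hℓ0, hΨc.1]
    simp
  · intro a b
    show Real.toNNReal (ℓ (a+b) + n * (Ψ (a+b) : ℝ))
      = Real.toNNReal (ℓ a + n * (Ψ a : ℝ)) + Real.toNNReal (ℓ b + n * (Ψ b : ℝ))
    have hΨab : (Ψ (a+b) : ℝ) = (Ψ a : ℝ) + (Ψ b : ℝ) := by
      rw [hΨc.2]; push_cast; ring
    rw [hℓadd, hΨab, show ℓ a + ℓ b + (n:ℝ) * ((Ψ a : ℝ) + (Ψ b : ℝ))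
      = (ℓ a + n * (Ψ a : ℝ)) + (ℓ b + n * (Ψ b : ℝ)) by ring]
    exact Real.toNNReal_add (hpos a) (hpos b)
  · intro f hf
    show ((Real.toNNReal (ℓ f + n * (Ψ f : ℝ)) : ℝ≥0) : ℝ≥0∞) = h f
    rw [hℓF f hf, hΨvan f hf]
    simp only [NNReal.coe_zero, mul_zero, add_zero]
    rw [show (h f).toReal = ((h f).toNNReal : ℝ) from rfl, Real.toNNReal_coe]
    exact ENNReal.coe_toNNReal hf

end Extension

section InfAt

lemma infAt_eq_zero {κ : Set (P → ℝ≥0)} {f : P} (hf : f ∈ dualF κ) : infAt P κ f = 0 :=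
  if_pos hf

lemma infAt_eq_top {κ : Set (P → ℝ≥0)} {f : P} (hf : f ∉ dualF κ) : infAt P κ f = ⊤ :=
  if_neg hf

lemma mem_dualF_add {κ : Set (P → ℝ≥0)} (hκ : κ ⊆ cone P) {a b : P} :
    a + b ∈ dualF κ ↔ a ∈ dualF κ ∧ b ∈ dualF κ := by
  constructor
  · intro hab
    exact ⟨fun φ hφ => ((isPFace_dualF hκ).2.2 a b hab) φ hφ,
      fun φ hφ => ((isPFace_dualF hκ).2.2 b a (by rwa [add_comm])) φ hφ⟩
  · rintro ⟨ha, hb⟩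
    exact (isPFace_dualF hκ).2.1 a b ha hb

end InfAt




end Stmt16

namespace Stmt16

open Stmt16Aux
open scoped NNReal ENNReal

variable (P : Type*) [AddCommMonoid P]

/-- Let `P` be a fine, saturated, sharp monoid with cone
`σ = Hom(P, ℝ≥0)` and extended cone `σ̄ = Hom(P, ℝ≥0 ∪ {∞})`.  Then:
(1) for each face `κ` of `σ`, `∞_κ ∈ σ̄`;
(2) `σ̄` is the disjoint union of the asymptotic cones `∞_κ + σ` over the faces `κ`
    of `σ` (each element of `σ̄` lies in `∞_κ + σ` for a unique face `κ`);
(3) each `∞_κ + σ` is a sub-semigroup of `σ̄` which is a monoid with neutral element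
    `∞_κ`;
(4) the surjection `σ → ∞_κ + σ`, `q ↦ ∞_κ + q`, is additive and identifies `∞_κ + σ`
    with the quotient cone `σ/(ℝκ)`: two elements have the same image iff they agree
    modulo (differences of) elements of `κ`. -/
theorem extended_cone_decomposition
    [IsCancelAdd P] (hFG : AddMonoid.FG P)
    (hsharp : ∀ a b : P, a + b = 0 → a = 0)
    (hsat : ∀ a b : P, ∀ n : ℕ, 0 < n → (∃ w : P, n • a = n • b + w) → ∃ c : P, a = b + c) :
    (∀ κ : Set (P → ℝ≥0), IsFace P κ → infAt P κ ∈ extCone P) ∧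
    (∀ h ∈ extCone P, ∃! κ : Set (P → ℝ≥0), IsFace P κ ∧ h ∈ asympCone P κ) ∧
    (∀ κ : Set (P → ℝ≥0), IsFace P κ →
      (∀ h₁ ∈ asympCone P κ, ∀ h₂ ∈ asympCone P κ, h₁ + h₂ ∈ asympCone P κ) ∧
      (∀ h ∈ asympCone P κ, infAt P κ + h = h)) ∧
    (∀ κ : Set (P → ℝ≥0), IsFace P κ →
      (∀ q ∈ cone P, ∀ q' ∈ cone P,
        (fun f => infAt P κ f + ((q + q') f : ℝ≥0∞)) =
          (fun f => infAt P κ f + (q f : ℝ≥0∞)) + (fun f => infAt P κ f + (q' f : ℝ≥0∞))) ∧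
      (∀ q ∈ cone P, ∀ q' ∈ cone P,
        ((fun f => infAt P κ f + (q f : ℝ≥0∞)) = fun f => infAt P κ f + (q' f : ℝ≥0∞)) ↔
          ∃ k ∈ κ, ∃ k' ∈ κ, q + k = q' + k')) := by
  classical
  obtain ⟨S, hS⟩ := hFG.fg_top
  refine ⟨?_, ?_, ?_, ?_⟩
  · -- (1) : infAt is a monoid hom
    intro κ hκ
    refine ⟨?_, fun a b => ?_⟩
    · exact infAt_eq_zero (fun φ hφ => (hκ.1 hφ).1)
    · by_cases ha : a ∈ dualF κ
      · by_cases hb : b ∈ dualF κ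
        · rw [infAt_eq_zero ((mem_dualF_add hκ.1).mpr ⟨ha, hb⟩), infAt_eq_zero ha,
            infAt_eq_zero hb, add_zero]
        · rw [infAt_eq_top (fun hc => hb ((mem_dualF_add hκ.1).mp hc).2), infAt_eq_top hb,
            add_top _]
      · rw [infAt_eq_top (fun hc => ha ((mem_dualF_add hκ.1).mp hc).1), infAt_eq_top ha,
          top_add _]
  · -- (2) : unique decomposition
    intro h hh
    set κ₀ : Set (P → ℝ≥0) := {φ | φ ∈ cone P ∧ ∀ f, h f ≠ ⊤ → φ f = 0} with hκ₀def
    have hκ₀face : IsFace P κ₀ := by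
      refine ⟨fun φ hφ => hφ.1, ⟨cone_zero_mem, fun f _ => rfl⟩, ?_, ?_⟩
      · rintro φ ⟨hφc, hφv⟩ φ' ⟨hφ'c, hφ'v⟩
        refine ⟨cone_add_mem hφc hφ'c, fun f hf => ?_⟩
        show φ f + φ' f = 0
        rw [hφv f hf, hφ'v f hf, add_zero]
      · rintro φ hφc φ' hφ'c ⟨_, hv⟩
        constructor
        · refine ⟨hφc, fun f hf => ?_⟩
          have := hv f hf
          exact (add_eq_zero.mp this).1
        · refine ⟨hφ'c, fun f hf => ?_⟩
          have := hv f hf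
          exact (add_eq_zero.mp this).2
    have hmem : h ∈ asympCone P κ₀ := by
      obtain ⟨q, hq, hqF⟩ := extension hS hh
      refine ⟨q, hq, ?_⟩
      funext f
      by_cases hf : h f = ⊤
      · obtain ⟨φ, hφhom, hφvan, hφne⟩ :=
          separation hS (isPFace_finite hh) (f0 := f) (fun hc => hc hf)
        have hφκ₀ : φ ∈ κ₀ := ⟨⟨hφhom.1, hφhom.2⟩, fun g hg => hφvan g hg⟩
        have htop : infAt P κ₀ f = ⊤ := if_neg (fun hall => hφne (hall φ hφκ₀))
        rw [hf, htop, top_add _]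
      · have hz : infAt P κ₀ f = 0 := if_pos (fun φ hφ => hφ.2 f hf)
        rw [hz, zero_add, hqF f hf]
    refine ⟨κ₀, ⟨hκ₀face, hmem⟩, ?_⟩
    rintro κ' ⟨hκ'face, q', hq', hdef⟩
    have hdual : ∀ f, f ∈ dualF κ' ↔ h f ≠ ⊤ := by
      intro f
      have hfeq : h f = infAt P κ' f + (q' f : ℝ≥0∞) := congrFun hdef f
      constructor
      · intro hfd
        rw [hfeq, infAt_eq_zero hfd, zero_add]
        exact ENNReal.coe_ne_top
      · intro hfne
        by_contra hfd
        rw [hfeq, infAt_eq_top hfd, top_add _] at hfne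
        exact hfne rfl
    ext ψ
    constructor
    · intro hψ
      exact ⟨hκ'face.1 hψ, fun f hf => ((hdual f).mpr hf) ψ hψ⟩
    · rintro ⟨hψc, hψv⟩
      exact mem_face_of_vanish hS hκ'face hψc fun f hf => hψv f ((hdual f).mp hf)
  · -- (3) : semigroup structure
    intro κ hκ
    constructor
    · rintro h₁ ⟨q₁, hq₁, rfl⟩ h₂ ⟨q₂, hq₂, rfl⟩
      refine ⟨q₁ + q₂, cone_add_mem hq₁ hq₂, ?_⟩
      funext f
      show (infAt P κ f + (q₁ f : ℝ≥0∞)) + (infAt P κ f + (q₂ f : ℝ≥0∞))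
        = infAt P κ f + ((q₁ f + q₂ f : ℝ≥0) : ℝ≥0∞)
      by_cases hf : f ∈ dualF κ
      · rw [infAt_eq_zero hf, zero_add, zero_add, zero_add, ENNReal.coe_add]
      · rw [infAt_eq_top hf, top_add _, top_add _, top_add _]
    · rintro h ⟨q, hq, rfl⟩
      funext f
      show infAt P κ f + (infAt P κ f + (q f : ℝ≥0∞)) = infAt P κ f + (q f : ℝ≥0∞)
      by_cases hf : f ∈ dualF κ
      · rw [infAt_eq_zero hf, zero_add]
      · rw [infAt_eq_top hf, top_add _, top_add _]
  · -- (4) : additivity and the quotient description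
    intro κ hκ
    constructor
    · intro q hq q' hq'
      funext f
      show infAt P κ f + ((q f + q' f : ℝ≥0) : ℝ≥0∞)
        = (infAt P κ f + (q f : ℝ≥0∞)) + (infAt P κ f + (q' f : ℝ≥0∞))
      by_cases hf : f ∈ dualF κ
      · rw [infAt_eq_zero hf, zero_add, zero_add, zero_add, ENNReal.coe_add]
      · rw [infAt_eq_top hf, top_add _, top_add _, top_add _]
    · intro q hq q' hq'
      constructor
      · intro heq
        refine exists_translation hS hκ hq hq' fun f hf => ?_
        have := congrFun heq f
        rw [infAt_eq_zero hf, zero_add, zero_add] at this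
        exact_mod_cast this
      · rintro ⟨k, hk, k', hk', heq⟩
        funext f
        by_cases hf : f ∈ dualF κ
        · have hkf : k f = 0 := hf k hk
          have hk'f : k' f = 0 := hf k' hk'
          have h1 : q f + k f = q' f + k' f := congrFun heq f
          rw [hkf, hk'f, add_zero, add_zero] at h1
          show infAt P κ f + (q f : ℝ≥0∞) = infAt P κ f + (q' f : ℝ≥0∞)
          rw [h1]
        · show infAt P κ f + (q f : ℝ≥0∞) = infAt P κ f + (q' f : ℝ≥0∞)
          rw [infAt_eq_top hf, top_add _, top_add _]

end Stmt16
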